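/- Let R be a unique factorization domain that is not a field, and let M be a finitely generated R-module. Then M is pseudo-null if and only if there exist nonzero elements f₁, f₂ ∈ R having no common non-unit divisor such that f₁ · M = 0 and f₂ · M = 0. -/

import Mathlib

open UniqueFactorizationMonoid

section Aux

variable {R : Type*} [CommRing R] [IsDomain R] [UniqueFactorizationMonoid R]

/-- Kaplansky-style descent: a prime ideal strictly contained in a principal prime is `⊥`. -/
lemma aux_descent {p : R} (hp : Prime p) {Q : Ideal R} (hQ : Q.IsPrime)
    (hlt : Q < Ideal.span {p}) : Q = ⊥ := by
  have hpQ : p ∉ Q := fun h =>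
    absurd ((Ideal.span_singleton_le_iff_mem Q).mpr h) (not_le_of_gt hlt)
  have key : ∀ q, q ∈ Q → q = 0 := fun q =>
    WellFounded.induction wellFounded_dvdNotUnit
      (C := fun q => q ∈ Q → q = 0) q
      (fun x IH hx => by
        by_contra hx0
        have hxp : x ∈ Ideal.span {p} := le_of_lt hlt hx
        obtain ⟨a, rfl⟩ := Ideal.mem_span_singleton.mp hxp
        have haQ : a ∈ Q := (hQ.mem_or_mem hx).resolve_left hpQ
        have ha0 : a ≠ 0 := fun h => hx0 (by simp [h])
        have : DvdNotUnit a (p * a) := ⟨ha0, p, hp.not_unit, mul_comm p a⟩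
        exact absurd (IH a this haQ) (fun h => hx0 (by simp [h])))
  ext q
  simp only [Ideal.mem_bot]
  exact ⟨key q, fun h => h ▸ Q.zero_mem⟩

lemma aux_height_span_prime {p : R} (hp : Prime p) :
    Order.height (⟨Ideal.span {p},
      (Ideal.span_singleton_prime hp.ne_zero).mpr hp⟩ : PrimeSpectrum R) = 1 := by
  set Pp : PrimeSpectrum R := ⟨Ideal.span {p}, (Ideal.span_singleton_prime hp.ne_zero).mpr hp⟩
  apply le_antisymm
  · rw [show (1 : ℕ∞) = ((1 : ℕ) : ℕ∞) from rfl, Order.height_le_coe_iff]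
    intro y hy
    have hb : y.asIdeal = ⊥ := aux_descent hp y.2 hy
    have : y = (⊥ : PrimeSpectrum R) := PrimeSpectrum.ext hb
    rw [this, Order.height_bot]
    norm_num
  · rw [ENat.one_le_iff_ne_zero, Ne, Order.height_eq_zero]
    intro hmin
    have : Pp ≤ ⊥ := hmin bot_le
    have : Ideal.span {p} = (⊥ : Ideal R) := le_bot_iff.mp this
    exact hp.ne_zero (by simpa [Ideal.span_singleton_eq_bot] using this)

/-- A height-one prime containing a prime element `p` equals `(p)`. -/
lemma aux_height_one_eq_span {P : PrimeSpectrum R} (hP : Order.height P = 1) {p : R}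
    (hp : Prime p) (hmem : p ∈ P.asIdeal) : P.asIdeal = Ideal.span {p} := by
  set Q : PrimeSpectrum R := ⟨Ideal.span {p}, (Ideal.span_singleton_prime hp.ne_zero).mpr hp⟩
  have hQP : Q ≤ P := (Ideal.span_singleton_le_iff_mem P.asIdeal).mpr hmem
  rcases lt_or_eq_of_le hQP with hlt | heq
  · exfalso
    have h1 : Order.height P ≤ ((1 : ℕ) : ℕ∞) := le_of_eq (by exact_mod_cast hP)
    have hlt1 : Order.height Q < ((1 : ℕ) : ℕ∞) := (Order.height_le_coe_iff.mp h1) Q hlt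
    have hQ0 : Order.height Q = 0 := by
      have := (ENat.lt_one_iff_eq_zero (n := Order.height Q)).mp (by exact_mod_cast hlt1)
      exact this
    have hmin : IsMin Q := Order.height_eq_zero.mp hQ0
    have : Q ≤ ⊥ := hmin bot_le
    have : Ideal.span {p} = (⊥ : Ideal R) := le_bot_iff.mp this
    exact hp.ne_zero (by simpa [Ideal.span_singleton_eq_bot] using this)
  · exact congrArg PrimeSpectrum.asIdeal heq.symm

variable {M : Type*} [AddCommGroup M] [Module R M]

lemma aux_subsingleton_of_ann (S : Submonoid R) {f : R} (hf : f ∈ S)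
    (hann : ∀ m : M, f • m = 0) : Subsingleton (LocalizedModule S M) := by
  refine ⟨fun x y => ?_⟩
  induction x using LocalizedModule.induction_on with
  | h m s =>
  induction y using LocalizedModule.induction_on with
  | h m' s' =>
  refine LocalizedModule.mk_eq.mpr ⟨⟨f, hf⟩, ?_⟩
  have h1 : (⟨f, hf⟩ : S) • (s' • m) = (0 : M) := by
    rw [Submonoid.smul_def]; exact hann _
  have h2 : (⟨f, hf⟩ : S) • (s • m') = (0 : M) := by
    rw [Submonoid.smul_def]; exact hann _
  rw [h1, h2]

lemma aux_exists_ann (S : Submonoid R) [Module.Finite R M]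
    (h : Subsingleton (LocalizedModule S M)) : ∃ s ∈ S, ∀ m : M, s • m = 0 := by
  obtain ⟨n, g, hg⟩ := Module.Finite.exists_fin (R := R) (M := M)
  have hone : ∀ m : M, ∃ c : S, (c : R) • m = 0 := by
    intro m
    have := @Subsingleton.elim _ h (LocalizedModule.mk m 1) (LocalizedModule.mk 0 1)
    obtain ⟨u, hu⟩ := LocalizedModule.mk_eq.mp this
    refine ⟨u, ?_⟩
    simpa [Submonoid.smul_def] using hu
  choose c hc using fun i : Fin n => hone (g i)
  refine ⟨((∏ i, c i : S) : R), (∏ i, c i : S).2, ?_⟩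
  have ht : ∀ i, ((∏ i, c i : S) : R) • g i = 0 := by
    intro i
    have hcoe : ((∏ j, c j : S) : R) = ∏ j, (c j : R) := by push_cast; rfl
    rw [hcoe, ← Finset.mul_prod_erase Finset.univ (fun j => (c j : R)) (Finset.mem_univ i),
      mul_comm, mul_smul, hc i, smul_zero]
  intro m
  have hm : m ∈ Submodule.span R (Set.range g) := hg ▸ Submodule.mem_top
  induction hm using Submodule.span_induction with
  | mem x hx => obtain ⟨i, rfl⟩ := hx; exact ht i
  | zero => simp
  | add x y _ _ hx hy => rw [smul_add, hx, hy, add_zero]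
  | smul a x _ hx => rw [smul_comm, hx, smul_zero]

end Aux

/-- A module `M` over `R` is pseudo-null if its localization at every height-one
prime ideal of `R` vanishes. -/
def IsPseudoNull (R : Type*) [CommRing R] (M : Type*) [AddCommGroup M] [Module R M] : Prop :=
  ∀ P : PrimeSpectrum R, Order.height P = 1 →
    Subsingleton (LocalizedModule P.asIdeal.primeCompl M)

/-- Over a UFD `R` which is not a field, a finitely generated module `M` is pseudo-null
iff it is annihilated by two nonzero elements having no common non-unit divisor. -/
theorem stmt_0 (R : Type*) [CommRing R] [IsDomain R] [UniqueFactorizationMonoid R]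
    (hR : ¬ IsField R) (M : Type*) [AddCommGroup M] [Module R M] [Module.Finite R M] :
    IsPseudoNull R M ↔
      ∃ f₁ f₂ : R, f₁ ≠ 0 ∧ f₂ ≠ 0 ∧ (∀ d : R, d ∣ f₁ → d ∣ f₂ → IsUnit d) ∧
        (∀ m : M, f₁ • m = 0) ∧ (∀ m : M, f₂ • m = 0) := by
  constructor
  · intro hpn
    -- For every prime element p, the annihilator is not contained in (p).
    have hAnn : ∀ p : R, Prime p → ∃ s : R, s ∉ Ideal.span {p} ∧ ∀ m : M, s • m = 0 := by
      intro p hp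
      set Pp : PrimeSpectrum R :=
        ⟨Ideal.span {p}, (Ideal.span_singleton_prime hp.ne_zero).mpr hp⟩
      haveI : Pp.asIdeal.IsPrime := Pp.2
      obtain ⟨s, hsS, hs⟩ := aux_exists_ann Pp.asIdeal.primeCompl
        (hpn Pp (aux_height_span_prime hp))
      exact ⟨s, hsS, hs⟩
    -- There exists a prime element since R is not a field.
    obtain ⟨I, hIbot, hIprime⟩ := Ring.not_isField_iff_exists_prime.mp hR
    obtain ⟨x, hxI, hx0⟩ := Submodule.exists_mem_ne_zero_of_ne_bot hIbot
    have hxu : ¬IsUnit x := fun hu => hIprime.ne_top (I.eq_top_of_isUnit_mem hxI hu)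
    obtain ⟨p₀, hp₀irr, _⟩ := WfDvdMonoid.exists_irreducible_factor hxu hx0
    have hp₀ : Prime p₀ := (UniqueFactorizationMonoid.irreducible_iff_prime).mp hp₀irr
    obtain ⟨f₁, hf₁p, hf₁ann⟩ := hAnn p₀ hp₀
    have hf₁0 : f₁ ≠ 0 := fun h => hf₁p (h ▸ Ideal.zero_mem _)
    by_cases hf₁u : IsUnit f₁
    · -- M = 0
      have hM : ∀ m : M, m = 0 := by
        intro m
        obtain ⟨u, rfl⟩ := hf₁u
        have := hf₁ann m
        calc m = ((u⁻¹ : Rˣ) : R) • ((u : R) • m) := by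
                rw [← mul_smul, Units.inv_mul, one_smul]
          _ = 0 := by rw [this, smul_zero]
      exact ⟨1, 1, one_ne_zero, one_ne_zero, fun d hd _ => isUnit_of_dvd_one hd,
        fun m => by rw [one_smul, hM m], fun m => by rw [one_smul, hM m]⟩
    · classical
      set s : Finset R := (factors f₁).toFinset with hs
      have hsne : s.Nonempty := by
        rcases Finset.eq_empty_or_nonempty s with h | h
        · exfalso
          have hz : factors f₁ = 0 := by simpa [hs] using h
          have hassoc := factors_prod hf₁0
          rw [hz, Multiset.prod_zero] at hassoc
          exact hf₁u (associated_one_iff_isUnit.mp hassoc.symm)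
        · exact h
      have hprime : ∀ i ∈ s, Prime i := fun i hi =>
        prime_of_factor i (Multiset.mem_toFinset.mp hi)
      have hnotle : ∀ i ∈ s, ¬(Module.annihilator R M ≤ Ideal.span {i}) := by
        intro i hi hle
        obtain ⟨t, htn, hta⟩ := hAnn i (hprime i hi)
        exact htn (hle (Module.mem_annihilator.mpr hta))
      have hnsub : ¬((Module.annihilator R M : Set R) ⊆ ⋃ i ∈ (s : Set R), Ideal.span {i}) := by
        intro hsub
        obtain ⟨i, his, hle⟩ := (Ideal.subset_union_prime f₁ f₁
          (fun i hi _ _ => (Ideal.span_singleton_prime (hprime i hi).ne_zero).mpr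
            (hprime i hi))).mp hsub
        exact hnotle i his hle
      obtain ⟨f₂, hf₂ann, hf₂n⟩ := Set.not_subset.mp hnsub
      have hf₂ : ∀ i ∈ s, f₂ ∉ Ideal.span {i} := by
        intro i hi hmem
        exact hf₂n (Set.mem_biUnion hi hmem)
      obtain ⟨q, hqs⟩ := hsne
      have hf₂0 : f₂ ≠ 0 := fun h => hf₂ q hqs (h ▸ Ideal.zero_mem _)
      refine ⟨f₁, f₂, hf₁0, hf₂0, ?_, hf₁ann, Module.mem_annihilator.mp hf₂ann⟩
      intro d hd1 hd2
      by_contra hdu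
      have hd0 : d ≠ 0 := fun h => hf₂0 (zero_dvd_iff.mp (h ▸ hd2))
      obtain ⟨r, hrirr, hrd⟩ := WfDvdMonoid.exists_irreducible_factor hdu hd0
      obtain ⟨p, hpf, hassoc⟩ := exists_mem_factors_of_dvd hf₁0 hrirr (hrd.trans hd1)
      have hps : p ∈ s := Multiset.mem_toFinset.mpr hpf
      have : p ∣ f₂ := (hassoc.symm.dvd).trans (hrd.trans hd2)
      exact hf₂ p hps (Ideal.mem_span_singleton.mpr this)
  · rintro ⟨f₁, f₂, hf₁0, hf₂0, hcop, hann₁, hann₂⟩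
    intro P hP
    by_cases h1 : f₁ ∈ P.asIdeal
    · -- find prime factor p of f₁ in P; then P = (p) and f₂ ∉ P
      have hprod : (factors f₁).prod ∈ P.asIdeal := by
        obtain ⟨u, hu⟩ := factors_prod hf₁0
        rw [(Units.eq_mul_inv_iff_mul_eq u).mpr hu]
        exact Ideal.mul_mem_right _ _ h1
      obtain ⟨p, hpf, hpP⟩ := (P.2.multiset_prod_mem_iff_exists_mem _).mp hprod
      have hp : Prime p := prime_of_factor p hpf
      have hPeq : P.asIdeal = Ideal.span {p} := aux_height_one_eq_span hP hp hpP
      have h2 : f₂ ∉ P.asIdeal := by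
        intro h2
        rw [hPeq, Ideal.mem_span_singleton] at h2
        exact hp.not_unit (hcop p (dvd_of_mem_factors hpf) h2)
      exact aux_subsingleton_of_ann P.asIdeal.primeCompl h2 hann₂
    · exact aux_subsingleton_of_ann P.asIdeal.primeCompl h1 hann₁
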